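/- Let G₁ = (V₁, E₁) and G₂ = (V₂, E₂) be finite simple graphs and let ψ : X(G₁) → X(G₂) be an isomorphism of k-algebras. Then there is a graph isomorphism σ : G₁ → G₂ such that ψ(b_v) = b_{σ(v)} for every v ∈ V₁ and ψ(b_{{v,w}}) = b_{{σ(v),σ(w)}} for every edge {v,w} ∈ E₁; in particular ψ = X(σ). -/
import Mathlib


open scoped BigOperators

variable (k : Type*) [Field k]

section Defs

variable {V : Type*} [Fintype V] [DecidableEq V]

/-- The square `b i * b i` of the `i`-th natural basis vector of the evolution algebra
`X(G)` attached to a simple graph `G`: for a vertex `v`, `b_v * b_v = b_v`; for an edge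
`e = {v, w}`, `b_e * b_e = b_e + b_v + b_w`. -/
noncomputable def graphSq (G : SimpleGraph V) [DecidableRel G.Adj] :
    (V ⊕ ↥G.edgeSet) → (V ⊕ ↥G.edgeSet) → k
  | Sum.inl v => Pi.single (Sum.inl v) 1
  | Sum.inr e => Pi.single (Sum.inr e) 1 +
      ∑ v ∈ Finset.univ.filter (· ∈ (e : Sym2 V)), Pi.single (Sum.inl v) 1

/-- The multiplication of the evolution algebra `X(G)` attached to a simple graph `G`,
as a `k`-bilinear map on the space of functions `(V ⊕ G.edgeSet) → k`.  Distinct natural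
basis vectors multiply to zero, and the squares are given by `graphSq`. -/
noncomputable def graphMul (G : SimpleGraph V) [DecidableRel G.Adj] :
    ((V ⊕ ↥G.edgeSet) → k) →ₗ[k] ((V ⊕ ↥G.edgeSet) → k) →ₗ[k] ((V ⊕ ↥G.edgeSet) → k) :=
  LinearMap.mk₂ k (fun x y => ∑ i, (x i * y i) • graphSq k G i)
    (by intro x x' y; simp [add_mul, add_smul, Finset.sum_add_distrib])
    (by intro c x y; simp [Finset.smul_sum, smul_smul, mul_assoc])
    (by intro x y y'; simp [mul_add, add_smul, Finset.sum_add_distrib])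
    (by intro c x y; simp [Finset.smul_sum, smul_smul, mul_assoc, mul_left_comm])

end Defs

section Morphisms

variable {V₁ V₂ : Type*} [Fintype V₁] [DecidableEq V₁] [Fintype V₂] [DecidableEq V₂]

/-- The map induced on natural-basis index sets by a graph morphism `f : G₁ → G₂`:
a vertex `v` is sent to `f v` and an edge `{v, w}` to `{f v, f w}`. -/
def graphIdxMap (G₁ : SimpleGraph V₁) (G₂ : SimpleGraph V₂) (f : V₁ → V₂)
    (hf : ∀ ⦃v w : V₁⦄, G₁.Adj v w → G₂.Adj (f v) (f w)) :
    V₁ ⊕ ↥G₁.edgeSet → V₂ ⊕ ↥G₂.edgeSet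
  | Sum.inl v => Sum.inl (f v)
  | Sum.inr e => Sum.inr ⟨Sym2.map f (e : Sym2 V₁), by
      obtain ⟨s, hs⟩ := e
      induction s using Sym2.ind with
      | _ v w => simpa using hf (by simpa using hs)⟩

/-- The `k`-linear map `X(f) : X(G₁) → X(G₂)` induced by a graph morphism `f`, sending
each natural basis vector of `X(G₁)` to the corresponding natural basis vector of
`X(G₂)`. -/
noncomputable def graphXmap (G₁ : SimpleGraph V₁) (G₂ : SimpleGraph V₂)
    [DecidableRel G₁.Adj] [DecidableRel G₂.Adj] (f : V₁ → V₂)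
    (hf : ∀ ⦃v w : V₁⦄, G₁.Adj v w → G₂.Adj (f v) (f w)) :
    ((V₁ ⊕ ↥G₁.edgeSet) → k) →ₗ[k] ((V₂ ⊕ ↥G₂.edgeSet) → k) :=
  (Pi.basisFun k (V₁ ⊕ ↥G₁.edgeSet)).constr k fun i =>
    Pi.single (graphIdxMap G₁ G₂ f hf i) 1

end Morphisms

section Lemmas

variable {V : Type*} [Fintype V] [DecidableEq V] (G : SimpleGraph V) [DecidableRel G.Adj]

lemma graphMul_apply (x y : (V ⊕ ↥G.edgeSet) → k) :
    graphMul k G x y = ∑ i, (x i * y i) • graphSq k G i := rfl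

lemma sum_smul_graphSq_apply_inr (a : (V ⊕ ↥G.edgeSet) → k) (e : ↥G.edgeSet) :
    (∑ i, a i • graphSq k G i) (Sum.inr e) = a (Sum.inr e) := by
  rw [Finset.sum_apply, Fintype.sum_sum_type]
  simp [graphSq, Pi.single_apply]

lemma sum_smul_graphSq_apply_inl (a : (V ⊕ ↥G.edgeSet) → k) (v : V) :
    (∑ i, a i • graphSq k G i) (Sum.inl v)
      = a (Sum.inl v) + ∑ e : ↥G.edgeSet, if v ∈ (e : Sym2 V) then a (Sum.inr e) else 0 := by
  rw [Finset.sum_apply, Fintype.sum_sum_type]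
  have h1 : ∑ x : V, (a (Sum.inl x) • graphSq k G (Sum.inl x)) (Sum.inl v)
      = a (Sum.inl v) := by
    simp [graphSq, Pi.single_apply]
  have h2 : ∀ e : ↥G.edgeSet, (a (Sum.inr e) • graphSq k G (Sum.inr e)) (Sum.inl v)
      = if v ∈ (e : Sym2 V) then a (Sum.inr e) else 0 := by
    intro e
    simp only [graphSq, Pi.smul_apply, Pi.add_apply, Finset.sum_apply, smul_eq_mul]
    rw [Pi.single_eq_of_ne (by simp), Finset.sum_filter]
    rw [Finset.sum_eq_single v (fun b _ hb => by simp [Pi.single_apply, Ne.symm hb])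
      (by simp)]
    by_cases h : v ∈ (e : Sym2 V) <;> simp [h]
  rw [h1, Finset.sum_congr rfl fun e _ => h2 e]

lemma graphSq_coeffs_eq_zero (a : (V ⊕ ↥G.edgeSet) → k)
    (h : ∑ i, a i • graphSq k G i = 0) : a = 0 := by
  have he : ∀ e : ↥G.edgeSet, a (Sum.inr e) = 0 := fun e => by
    have := congrFun h (Sum.inr e)
    rwa [sum_smul_graphSq_apply_inr] at this
  funext i
  match i with
  | Sum.inr e => exact he e
  | Sum.inl v =>
    have := congrFun h (Sum.inl v)
    rw [sum_smul_graphSq_apply_inl] at this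
    simpa [he] using this

lemma graphMul_eq_zero_iff (x y : (V ⊕ ↥G.edgeSet) → k) :
    graphMul k G x y = 0 ↔ ∀ i, x i * y i = 0 := by
  rw [graphMul_apply]
  constructor
  · intro h i
    have := congrFun (graphSq_coeffs_eq_zero k G _ h) i
    simpa using this
  · intro h
    simp [h]

lemma graphMul_single_single (i : V ⊕ ↥G.edgeSet) :
    graphMul k G (Pi.single i 1) (Pi.single i 1) = graphSq k G i := by
  rw [graphMul_apply, Finset.sum_eq_single i (fun b _ hb => by simp [Pi.single_apply, hb])
    (by simp)]
  simp

end Lemmas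

section Lemmas2

variable {V : Type*} [Fintype V] [DecidableEq V] (G : SimpleGraph V) [DecidableRel G.Adj]

lemma graphSq_inl (v : V) :
    graphSq k G (Sum.inl v) = Pi.single (Sum.inl v) 1 := rfl

lemma graphSq_inr_apply_inl (e : ↥G.edgeSet) (v : V) :
    graphSq k G (Sum.inr e) (Sum.inl v) = if v ∈ (e : Sym2 V) then 1 else 0 := by
  simp only [graphSq, Pi.add_apply, Finset.sum_apply]
  rw [Pi.single_eq_of_ne (by simp), Finset.sum_filter]
  rw [Finset.sum_eq_single v (fun b _ hb => by simp [Pi.single_apply, Ne.symm hb]) (by simp)]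
  by_cases h : v ∈ (e : Sym2 V) <;> simp [h]

lemma graphSq_inr_apply_inr (e e' : ↥G.edgeSet) :
    graphSq k G (Sum.inr e) (Sum.inr e') = if e' = e then 1 else 0 := by
  simp only [graphSq, Pi.add_apply, Finset.sum_apply]
  rw [Finset.sum_eq_zero (fun b _ => by simp [Pi.single_apply])]
  simp [Pi.single_apply]

lemma graphSq_inr_eq (e : ↥G.edgeSet) (v w : V) (hvw : (e : Sym2 V) = s(v, w))
    (hne : v ≠ w) :
    graphSq k G (Sum.inr e) = Pi.single (Sum.inr e) 1 +
      Pi.single (Sum.inl v) 1 + Pi.single (Sum.inl w) 1 := by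
  have hfilter : Finset.univ.filter (· ∈ (e : Sym2 V)) = {v, w} := by
    ext u; simp [hvw, Sym2.mem_iff]
  show (Pi.single (Sum.inr e) 1 + _ : _ → k) = _
  rw [hfilter, Finset.sum_pair hne, add_assoc]

end Lemmas2

/-- Every isomorphism of `k`-algebras `ψ : X(G₁) → X(G₂)` between the evolution algebras
of two finite simple graphs is induced by a graph isomorphism `σ : G₁ → G₂`: it carries
vertex basis vectors to vertex basis vectors and edge basis vectors to edge basis vectors
according to `σ`; in particular `ψ = X(σ)`. -/
theorem graphEvolutionAlgebra_iso_induced {V₁ V₂ : Type*} [Fintype V₁] [DecidableEq V₁]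
    [Fintype V₂] [DecidableEq V₂]
    (G₁ : SimpleGraph V₁) (G₂ : SimpleGraph V₂)
    [DecidableRel G₁.Adj] [DecidableRel G₂.Adj]
    (ψ : ((V₁ ⊕ ↥G₁.edgeSet) → k) ≃ₗ[k] ((V₂ ⊕ ↥G₂.edgeSet) → k))
    (hψ : ∀ x y : (V₁ ⊕ ↥G₁.edgeSet) → k,
        ψ (graphMul k G₁ x y) = graphMul k G₂ (ψ x) (ψ y)) :
    ∃ σ : G₁ ≃g G₂,
      (∀ v : V₁, ψ (Pi.single (Sum.inl v) 1) = Pi.single (Sum.inl (σ v)) 1) ∧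
      (∀ e : ↥G₁.edgeSet,
        ψ (Pi.single (Sum.inr e) 1) = Pi.single (Sum.inr (σ.mapEdgeSet e)) 1) ∧
      ψ.toLinearMap = graphXmap k G₁ G₂ σ (fun _ _ h => σ.map_rel_iff.mpr h) := by
  classical
  set c : (V₁ ⊕ ↥G₁.edgeSet) → ((V₂ ⊕ ↥G₂.edgeSet) → k) :=
    fun i => ψ (Pi.single i 1) with hc
  -- orthogonality
  have horth : ∀ i j, i ≠ j → ∀ n, c i n * c j n = 0 := by
    intro i j hij n
    have h0 : graphMul k G₁ (Pi.single i 1) (Pi.single j 1) = 0 := by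
      rw [graphMul_eq_zero_iff]
      intro m
      rcases eq_or_ne m i with rfl | hmi
      · rw [Pi.single_eq_of_ne hij, mul_zero]
      · rw [Pi.single_eq_of_ne hmi, zero_mul]
    have h1 := hψ (Pi.single i 1) (Pi.single j 1)
    rw [h0, map_zero] at h1
    exact (graphMul_eq_zero_iff k G₂ _ _).mp h1.symm n
  have hcne : ∀ i, c i ≠ 0 := by
    intro i h
    have h2 : (Pi.single i 1 : (V₁ ⊕ ↥G₁.edgeSet) → k) = 0 :=
      ψ.injective (by rw [map_zero]; exact h)
    simpa using congrFun h2 i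
  -- cardinalities agree
  have hcard : Fintype.card (V₁ ⊕ ↥G₁.edgeSet) = Fintype.card (V₂ ⊕ ↥G₂.edgeSet) := by
    have := ψ.finrank_eq
    rwa [Module.finrank_pi, Module.finrank_pi] at this
  -- supports
  set S : (V₁ ⊕ ↥G₁.edgeSet) → Finset (V₂ ⊕ ↥G₂.edgeSet) :=
    fun i => Finset.univ.filter (fun n => c i n ≠ 0) with hS
  have hSne : ∀ i, (S i).Nonempty := by
    intro i
    obtain ⟨n, hn⟩ := Function.ne_iff.mp (hcne i)
    exact ⟨n, by simpa [hS] using hn⟩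
  have hSdisj : ∀ i j, i ≠ j → Disjoint (S i) (S j) := by
    intro i j hij
    rw [Finset.disjoint_left]
    intro n hni hnj
    simp only [hS, Finset.mem_filter] at hni hnj
    exact hni.2 (by
      have := horth i j hij n
      rcases mul_eq_zero.mp this with h | h
      · exact h
      · exact absurd h hnj.2)
  have hScard : ∀ i, (S i).card = 1 := by
    have hb : (Finset.univ.biUnion S).card = ∑ i, (S i).card :=
      Finset.card_biUnion (fun i _ j _ hij => hSdisj i j hij)
    have hle : ∑ i, (S i).card ≤ ∑ _i : V₁ ⊕ ↥G₁.edgeSet, 1 := by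
      rw [← hb, Finset.sum_const, smul_eq_mul, mul_one, Finset.card_univ, hcard]
      exact Finset.card_le_univ _
    have hge : ∀ i ∈ Finset.univ, 1 ≤ (S i).card := fun i _ =>
      Finset.card_pos.mpr (hSne i)
    have heq : ∑ _i : V₁ ⊕ ↥G₁.edgeSet, 1 = ∑ i, (S i).card :=
      le_antisymm (Finset.sum_le_sum hge) hle
    intro i
    exact ((Finset.sum_eq_sum_iff_of_le hge).mp heq i (Finset.mem_univ i)).symm
  have hsing : ∀ i, ∃ n, S i = {n} := fun i => Finset.card_eq_one.mp (hScard i)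
  choose π hπ using hsing
  have hmem : ∀ i n, n ∈ S i ↔ c i n ≠ 0 := by intro i n; simp [hS]
  have hlamne : ∀ i, c i (π i) ≠ 0 := fun i =>
    (hmem i (π i)).mp (by rw [hπ i]; exact Finset.mem_singleton_self _)
  have hrep : ∀ i, c i = c i (π i) • (Pi.single (π i) 1 : (V₂ ⊕ ↥G₂.edgeSet) → k) := by
    intro i
    funext n
    rcases eq_or_ne n (π i) with rfl | hn
    · simp
    · have hn0 : c i n = 0 := by
        by_contra h
        have := (hmem i n).mpr h
        rw [hπ i, Finset.mem_singleton] at this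
        exact hn this
      simp [hn0, Pi.single_eq_of_ne hn]
  have hπinj : Function.Injective π := by
    intro i j hij
    by_contra hne
    have h1 := horth i j hne (π i)
    have h2 : c j (π i) ≠ 0 := by rw [hij]; exact hlamne j
    exact (mul_ne_zero (hlamne i) h2) h1
  have hπbij : Function.Bijective π :=
    (Fintype.bijective_iff_injective_and_card π).mpr ⟨hπinj, hcard⟩
  -- squares
  have hsq : ∀ i, ψ (graphSq k G₁ i) = (c i (π i) * c i (π i)) • graphSq k G₂ (π i) := by
    intro i
    have hmm : graphMul k G₂ (c i) (c i)
        = (c i (π i) * c i (π i)) • graphSq k G₂ (π i) := by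
      conv_lhs => rw [hrep i]
      simp only [map_smul, LinearMap.smul_apply, graphMul_single_single, smul_smul]
    have h1 := hψ (Pi.single i 1) (Pi.single i 1)
    rw [graphMul_single_single] at h1
    exact h1.trans hmm
  have hzero : ∀ i n, n ≠ π i → c i n = 0 := by
    intro i n hn
    by_contra hcn
    have := (hmem i n).mpr hcn
    rw [hπ i, Finset.mem_singleton] at this
    exact hn this
  -- vertices go to vertices
  have hvert : ∀ v : V₁, ∃ w : V₂, π (Sum.inl v) = Sum.inl w ∧
      c (Sum.inl v) = Pi.single (Sum.inl w) 1 := by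
    intro v
    have h := hsq (Sum.inl v)
    rw [show graphSq k G₁ (Sum.inl v) = Pi.single (Sum.inl v) 1 from rfl] at h
    cases hp : π (Sum.inl v) with
    | inr f =>
      exfalso
      rw [hp] at h
      obtain ⟨x, y, hxy⟩ : ∃ x y, (f : Sym2 V₂) = s(x, y) :=
        Sym2.ind (fun x y => ⟨x, y, rfl⟩) (f : Sym2 V₂)
      have hx : x ∈ (f : Sym2 V₂) := by rw [hxy]; exact Sym2.mem_mk_left x y
      have h2 := congrFun h (Sum.inl x)
      rw [Pi.smul_apply, graphSq_inr_apply_inl, if_pos hx] at h2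
      have h3 : c (Sum.inl v) (Sum.inl x) = 0 := hzero _ _ (by rw [hp]; simp)
      rw [show ψ (Pi.single (Sum.inl v) 1) (Sum.inl x) = c (Sum.inl v) (Sum.inl x)
        from rfl, h3] at h2
      refine mul_ne_zero (hlamne (Sum.inl v)) (hlamne (Sum.inl v)) ?_
      rw [hp]
      simpa using h2.symm
    | inl w =>
      refine ⟨w, rfl, ?_⟩
      rw [hp, show graphSq k G₂ (Sum.inl w) = Pi.single (Sum.inl w) 1 from rfl] at h
      have hlne : c (Sum.inl v) (Sum.inl w) ≠ 0 := by
        have := hlamne (Sum.inl v); rwa [hp] at this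
      have h2 := congrFun h (Sum.inl w)
      rw [show ψ (Pi.single (Sum.inl v) 1) (Sum.inl w) = c (Sum.inl v) (Sum.inl w)
        from rfl] at h2
      simp only [Pi.smul_apply, Pi.single_eq_same, smul_eq_mul, mul_one] at h2
      have h3 : c (Sum.inl v) (Sum.inl w) * 1
          = c (Sum.inl v) (Sum.inl w) * c (Sum.inl v) (Sum.inl w) := by
        rw [mul_one]; exact h2
      have hlam1 : c (Sum.inl v) (Sum.inl w) = 1 := (mul_left_cancel₀ hlne h3).symm
      have hr := hrep (Sum.inl v)
      rw [hp] at hr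
      rw [hr, hlam1, one_smul]
  choose σ₀ hσ₀ hcσ using hvert
  have hσinj : Function.Injective σ₀ := by
    intro a b hab
    have h1 : π (Sum.inl a) = π (Sum.inl b) := by rw [hσ₀ a, hσ₀ b, hab]
    exact Sum.inl.inj (hπinj h1)
  -- edges go to edges
  have hedge : ∀ e : ↥G₁.edgeSet, ∃ f : ↥G₂.edgeSet, π (Sum.inr e) = Sum.inr f ∧
      c (Sum.inr e) = Pi.single (Sum.inr f) 1 ∧
      (f : Sym2 V₂) = Sym2.map σ₀ (e : Sym2 V₁) := by
    intro e
    obtain ⟨v, w, hvw⟩ : ∃ v w, (e : Sym2 V₁) = s(v, w) :=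
      Sym2.ind (fun v w => ⟨v, w, rfl⟩) (e : Sym2 V₁)
    have hadj : G₁.Adj v w := by
      rw [← SimpleGraph.mem_edgeSet, ← hvw]; exact e.2
    have hne : v ≠ w := hadj.ne
    have hσvw : σ₀ v ≠ σ₀ w := fun h => hne (hσinj h)
    have h := hsq (Sum.inr e)
    rw [graphSq_inr_eq k G₁ e v w hvw hne, map_add, map_add] at h
    rw [show ψ (Pi.single (Sum.inr e) 1) = c (Sum.inr e) from rfl,
      show ψ (Pi.single (Sum.inl v) 1) = c (Sum.inl v) from rfl,
      show ψ (Pi.single (Sum.inl w) 1) = c (Sum.inl w) from rfl,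
      hcσ v, hcσ w] at h
    -- h : c (inr e) + single (inl σ₀ v) 1 + single (inl σ₀ w) 1 = lam² • sq (π (inr e))
    cases hp : π (Sum.inr e) with
    | inl u =>
      exfalso
      rw [hp, show graphSq k G₂ (Sum.inl u) = Pi.single (Sum.inl u) 1 from rfl] at h
      obtain ⟨z, hz, hzu⟩ : ∃ z, (z = σ₀ v ∨ z = σ₀ w) ∧ z ≠ u := by
        rcases eq_or_ne u (σ₀ v) with rfl | hu
        · exact ⟨σ₀ w, Or.inr rfl, fun h' => hσvw h'.symm⟩
        · exact ⟨σ₀ v, Or.inl rfl, fun h' => hu h'.symm⟩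
      have h2 := congrFun h (Sum.inl z)
      have hcz : c (Sum.inr e) (Sum.inl z) = 0 :=
        hzero _ _ (by rw [hp]; simp [hzu])
      rcases hz with rfl | rfl
      · simpa [Pi.single_apply, hcz, hσvw, hzu] using h2
      · simpa [Pi.single_apply, hcz, Ne.symm hσvw, hzu] using h2
    | inr f =>
      rw [hp] at h
      have hlne : c (Sum.inr e) (Sum.inr f) ≠ 0 := by
        have := hlamne (Sum.inr e); rwa [hp] at this
      have h2 := congrFun h (Sum.inr f)
      rw [Pi.add_apply, Pi.add_apply, Pi.single_eq_of_ne (by simp),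
        Pi.single_eq_of_ne (by simp), Pi.smul_apply, graphSq_inr_apply_inr,
        if_pos rfl] at h2
      simp only [add_zero, smul_eq_mul, mul_one] at h2
      have h3 : c (Sum.inr e) (Sum.inr f) * 1
          = c (Sum.inr e) (Sum.inr f) * c (Sum.inr e) (Sum.inr f) := by
        rw [mul_one]; exact h2
      have hlam1 : c (Sum.inr e) (Sum.inr f) = 1 := (mul_left_cancel₀ hlne h3).symm
      have hce : c (Sum.inr e) = Pi.single (Sum.inr f) 1 := by
        have hr := hrep (Sum.inr e)
        rw [hp] at hr
        rw [hr, hlam1, one_smul]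
      refine ⟨f, rfl, hce, ?_⟩
      rw [hlam1, one_mul, one_smul] at h
      have hv2 : σ₀ v ∈ (f : Sym2 V₂) := by
        have h4 := congrFun h (Sum.inl (σ₀ v))
        rw [graphSq_inr_apply_inl] at h4
        by_contra hmemn
        rw [if_neg hmemn] at h4
        have hcz : c (Sum.inr e) (Sum.inl (σ₀ v)) = 0 := hzero _ _ (by rw [hp]; simp)
        simpa [Pi.single_apply, hcz, hσvw] using h4
      have hw2 : σ₀ w ∈ (f : Sym2 V₂) := by
        have h4 := congrFun h (Sum.inl (σ₀ w))
        rw [graphSq_inr_apply_inl] at h4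
        by_contra hmemn
        rw [if_neg hmemn] at h4
        have hcz : c (Sum.inr e) (Sum.inl (σ₀ w)) = 0 := hzero _ _ (by rw [hp]; simp)
        simpa [Pi.single_apply, hcz, Ne.symm hσvw] using h4
      have hf : (f : Sym2 V₂) = s(σ₀ v, σ₀ w) :=
        (Sym2.mem_and_mem_iff hσvw).mp ⟨hv2, hw2⟩
      rw [hf, hvw, Sym2.map_pair_eq]
  -- surjectivity of σ₀
  have hσsurj : Function.Surjective σ₀ := by
    intro w2
    obtain ⟨i, hi⟩ := hπbij.2 (Sum.inl w2)
    cases i with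
    | inl v => exact ⟨v, by rw [hσ₀ v] at hi; exact Sum.inl.inj hi⟩
    | inr e =>
      obtain ⟨f, hf, -, -⟩ := hedge e
      rw [hf] at hi
      exact absurd hi (by simp)
  have hσbij : Function.Bijective σ₀ := ⟨hσinj, hσsurj⟩
  have hfwd : ∀ {x y : V₁}, G₁.Adj x y → G₂.Adj (σ₀ x) (σ₀ y) := by
    intro x y hxy
    obtain ⟨f, -, -, hf⟩ := hedge ⟨s(x, y), hxy⟩
    rw [show ((⟨s(x, y), hxy⟩ : ↥G₁.edgeSet) : Sym2 V₁) = s(x, y) from rfl,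
      Sym2.map_pair_eq] at hf
    rw [← SimpleGraph.mem_edgeSet, ← hf]
    exact f.2
  have hbwd : ∀ {x y : V₁}, G₂.Adj (σ₀ x) (σ₀ y) → G₁.Adj x y := by
    intro x y hxy
    obtain ⟨i, hi⟩ := hπbij.2 (Sum.inr ⟨s(σ₀ x, σ₀ y), hxy⟩)
    cases i with
    | inl v => rw [hσ₀ v] at hi; exact absurd hi (by simp)
    | inr e =>
      obtain ⟨f, hf, -, hf2⟩ := hedge e
      rw [hf] at hi
      have hfs : (f : Sym2 V₂) = s(σ₀ x, σ₀ y) := by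
        rw [Sum.inr.inj hi]
      rw [hfs] at hf2
      have he : (e : Sym2 V₁) = s(x, y) := by
        apply Sym2.map.injective hσinj
        rw [← hf2, Sym2.map_pair_eq]
      have h5 := e.2
      rw [he] at h5
      exact h5
  let σ : G₁ ≃g G₂ := ⟨Equiv.ofBijective σ₀ hσbij, fun {a b} => ⟨hbwd, hfwd⟩⟩
  have hconc1 : ∀ v : V₁, ψ (Pi.single (Sum.inl v) 1) = Pi.single (Sum.inl (σ v)) 1 :=
    fun v => hcσ v
  have hconc2 : ∀ e : ↥G₁.edgeSet,
      ψ (Pi.single (Sum.inr e) 1) = Pi.single (Sum.inr (σ.mapEdgeSet e)) 1 := by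
    intro e
    obtain ⟨f, -, hce, hf⟩ := hedge e
    have hfe : σ.mapEdgeSet e = f := by
      apply Subtype.ext
      rw [show ((σ.mapEdgeSet e : ↥G₂.edgeSet) : Sym2 V₂) = Sym2.map σ₀ (e : Sym2 V₁)
        from rfl]
      exact hf.symm
    rw [hfe]
    exact hce
  refine ⟨σ, hconc1, hconc2, ?_⟩
  apply (Pi.basisFun k (V₁ ⊕ ↥G₁.edgeSet)).ext
  intro i
  rw [graphXmap, Module.Basis.constr_basis, Pi.basisFun_apply]
  cases i with
  | inl v => exact hconc1 v
  | inr e =>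
    have h6 := hconc2 e
    have h7 : graphIdxMap G₁ G₂ (⇑σ) (fun _ _ h => σ.map_rel_iff.mpr h) (Sum.inr e)
        = Sum.inr (σ.mapEdgeSet e) := by
      simp only [graphIdxMap]
      congr 1
    rw [h7]
    exact h6
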